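/- The sequence (ι_ε^k)_{k} converges to ι_ε in the L²([0,1])-norm as k tends to infinity: lim_{k→∞} ∫₀¹ (ι_ε^k(u) − ι_ε(u))² du = 0. -/

import Mathlib

open MeasureTheory Set

/-- `g_ε^{k,+}(z) = k[1_{(0,1/k]}(z) − 1_{(1/k,2/k]}(z)]`. -/
noncomputable def gPlus (k : ℕ) (z : ℝ) : ℝ :=
  (k:ℝ) * ((Set.Ioc (0:ℝ) (1/(k:ℝ))).indicator (fun _ => (1:ℝ)) z
    - (Set.Ioc (1/(k:ℝ)) (2/(k:ℝ))).indicator (fun _ => (1:ℝ)) z)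

/-- `g_ε^{k,−}(z) = k[1_{(ε−1/k,ε]}(z) − 1_{(ε,ε+1/k]}(z)]`. -/
noncomputable def gMinus (ε : ℝ) (k : ℕ) (z : ℝ) : ℝ :=
  (k:ℝ) * ((Set.Ioc (ε - 1/(k:ℝ)) ε).indicator (fun _ => (1:ℝ)) z
    - (Set.Ioc ε (ε + 1/(k:ℝ))).indicator (fun _ => (1:ℝ)) z)

/-- The normalizing constant `c_ε^{k,+}`. -/
noncomputable def cPlus (W : StieltjesFunction ℝ) (ε : ℝ) (k : ℕ) : ℝ :=
  ε⁻¹ * (∫ y in Set.Ioc (0:ℝ) 1, (∫ z in (0:ℝ)..y, gPlus k z) ∂W.measure)⁻¹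

/-- The normalizing constant `c_ε^{k,−}`. -/
noncomputable def cMinus (W : StieltjesFunction ℝ) (ε : ℝ) (k : ℕ) : ℝ :=
  ε⁻¹ * (∫ y in Set.Ioc (0:ℝ) 1, (∫ z in (0:ℝ)..y, gMinus ε k z) ∂W.measure)⁻¹

/-- `g_ε^k = c_ε^{k,+} g_ε^{k,+} − c_ε^{k,−} g_ε^{k,−}`. -/
noncomputable def gEpsK (W : StieltjesFunction ℝ) (ε : ℝ) (k : ℕ) (z : ℝ) : ℝ :=
  cPlus W ε k * gPlus k z - cMinus W ε k * gMinus ε k z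

/-- `ι_ε^k(u) = ∫_{(0,u]} (∫₀^y g_ε^k(z) dz) W(dy)`. -/
noncomputable def iotaK (W : StieltjesFunction ℝ) (ε : ℝ) (k : ℕ) (u : ℝ) : ℝ :=
  ∫ y in Set.Ioc (0:ℝ) u, (∫ z in (0:ℝ)..y, gEpsK W ε k z) ∂W.measure

/-- The approximation of the identity `ι_ε = ε⁻¹ 1_{[0,ε]}`. -/
noncomputable def iotaEps (ε : ℝ) (y : ℝ) : ℝ :=
  ε⁻¹ * (Set.Icc (0:ℝ) ε).indicator (fun _ => (1:ℝ)) y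

open MeasureTheory Set

lemma indInt (a b y : ℝ) (ha : 0 ≤ a) (hab : a ≤ b) :
    ∫ z in (0:ℝ)..y, (Ioc a b).indicator (fun _ => (1:ℝ)) z = max 0 (min b y - a) := by
  rcases le_or_gt 0 y with hy | hy
  · rw [intervalIntegral.integral_of_le hy, setIntegral_indicator measurableSet_Ioc,
      setIntegral_const, Ioc_inter_Ioc]
    simp only [smul_eq_mul, mul_one, Real.volume_Ioc]
    rw [Real.volume_real_Ioc, max_eq_right ha, min_comm y b, max_comm]
  · have h1 : ∫ z in (0:ℝ)..y, (Ioc a b).indicator (fun _ => (1:ℝ)) z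
        = - ∫ z in Ioc y 0, (Ioc a b).indicator (fun _ => (1:ℝ)) z := by
      rw [intervalIntegral.integral_of_ge hy.le]
    rw [h1]
    have h2 : ∀ z ∈ Ioc y (0:ℝ), (Ioc a b).indicator (fun _ => (1:ℝ)) z = 0 := by
      intro z hz
      apply indicator_of_notMem
      intro hzz
      exact absurd hz.2 (not_le.2 (lt_of_le_of_lt ha hzz.1))
    rw [setIntegral_congr_fun measurableSet_Ioc h2]
    simp only [integral_zero, neg_zero]
    have : min b y = y := min_eq_right (by linarith)
    rw [this, max_eq_left (by linarith)]

lemma indicator_integrable (a b : ℝ) :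
    Integrable ((Ioc a b).indicator fun _ => (1:ℝ)) := by
  rw [integrable_indicator_iff measurableSet_Ioc]
  exact integrableOn_const measure_Ioc_lt_top.ne

lemma gPlus_integrable (k : ℕ) : Integrable (gPlus k) :=
  ((indicator_integrable _ _).sub (indicator_integrable _ _)).const_mul _

lemma gMinus_integrable (ε : ℝ) (k : ℕ) : Integrable (gMinus ε k) :=
  ((indicator_integrable _ _).sub (indicator_integrable _ _)).const_mul _

noncomputable def tentP (k : ℕ) (y : ℝ) : ℝ := ∫ z in (0:ℝ)..y, gPlus k z
noncomputable def tentM (ε : ℝ) (k : ℕ) (y : ℝ) : ℝ := ∫ z in (0:ℝ)..y, gMinus ε k z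

lemma tentP_eq (k : ℕ) (hk : 1 ≤ k) (y : ℝ) :
    tentP k y = (k:ℝ) * max 0 (min (1/(k:ℝ)) y)
      - (k:ℝ) * max 0 (min (2/(k:ℝ)) y - 1/(k:ℝ)) := by
  have hK : (0:ℝ) < k := by exact_mod_cast hk
  have i1 := ((indicator_integrable (0:ℝ) (1/(k:ℝ))).intervalIntegrable (μ := volume) (a := 0) (b := y))
  have i2 := ((indicator_integrable (1/(k:ℝ)) (2/(k:ℝ))).intervalIntegrable (μ := volume) (a := 0) (b := y))
  have h : tentP k y = (k:ℝ) * ((∫ z in (0:ℝ)..y, (Ioc (0:ℝ) (1/(k:ℝ))).indicator (fun _ => (1:ℝ)) z)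
      - ∫ z in (0:ℝ)..y, (Ioc (1/(k:ℝ)) (2/(k:ℝ))).indicator (fun _ => (1:ℝ)) z) := by
    rw [tentP, ← intervalIntegral.integral_sub i1 i2, ← intervalIntegral.integral_const_mul]
    rfl
  rw [h, indInt _ _ _ le_rfl (by positivity), indInt _ _ _ (by positivity)
    (by rw [div_le_div_iff₀ hK hK]; nlinarith), sub_zero]
  ring

lemma tentM_eq (ε : ℝ) (k : ℕ) (hk : 0 ≤ ε - 1/(k:ℝ)) (hε : 0 ≤ 1/(k:ℝ)) (y : ℝ) :
    tentM ε k y = (k:ℝ) * max 0 (min ε y - (ε - 1/(k:ℝ)))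
      - (k:ℝ) * max 0 (min (ε + 1/(k:ℝ)) y - ε) := by
  have i1 := ((indicator_integrable (ε - 1/(k:ℝ)) ε).intervalIntegrable (μ := volume) (a := 0) (b := y))
  have i2 := ((indicator_integrable ε (ε + 1/(k:ℝ))).intervalIntegrable (μ := volume) (a := 0) (b := y))
  have h : tentM ε k y = (k:ℝ) * ((∫ z in (0:ℝ)..y, (Ioc (ε - 1/(k:ℝ)) ε).indicator (fun _ => (1:ℝ)) z)
      - ∫ z in (0:ℝ)..y, (Ioc ε (ε + 1/(k:ℝ))).indicator (fun _ => (1:ℝ)) z) := by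
    rw [tentM, ← intervalIntegral.integral_sub i1 i2, ← intervalIntegral.integral_const_mul]
    rfl
  rw [h, indInt _ _ _ hk (by linarith), indInt _ _ _ (by linarith) (by linarith)]
  ring

lemma tentP_nonneg (k : ℕ) (hk : 1 ≤ k) (y : ℝ) : 0 ≤ tentP k y := by
  have hK : (0:ℝ) < k := by exact_mod_cast hk
  rw [tentP_eq k hk y, sub_nonneg]
  apply mul_le_mul_of_nonneg_left _ hK.le
  apply max_le_max le_rfl
  have h1 : min (2/(k:ℝ)) y ≤ min (1/(k:ℝ) + 1/(k:ℝ)) (y + 1/(k:ℝ)) := by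
    apply min_le_min (le_of_eq (by ring)) (le_add_of_nonneg_right (by positivity))
  rw [min_add_add_right] at h1
  linarith

lemma tentP_le_one (k : ℕ) (hk : 1 ≤ k) (y : ℝ) : tentP k y ≤ 1 := by
  have hK : (0:ℝ) < k := by exact_mod_cast hk
  rw [tentP_eq k hk y]
  have h1 : max 0 (min (1/(k:ℝ)) y) ≤ 1/(k:ℝ) := max_le (by positivity) (min_le_left _ _)
  have h2 : (0:ℝ) ≤ (k:ℝ) * max 0 (min (2/(k:ℝ)) y - 1/(k:ℝ)) := by positivity
  have h3 : (k:ℝ) * max 0 (min (1/(k:ℝ)) y) ≤ (k:ℝ) * (1/(k:ℝ)) :=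
    mul_le_mul_of_nonneg_left h1 hK.le
  rw [mul_one_div_cancel hK.ne'] at h3
  linarith

lemma tentP_zero_of_ge (k : ℕ) (hk : 1 ≤ k) {y : ℝ} (hy : 2/(k:ℝ) ≤ y) : tentP k y = 0 := by
  have hK : (0:ℝ) < k := by exact_mod_cast hk
  have h12 : (1:ℝ)/(k:ℝ) ≤ 2/(k:ℝ) := by rw [div_le_div_iff₀ hK hK]; nlinarith
  rw [tentP_eq k hk y, min_eq_left (le_trans h12 hy), min_eq_left hy,
    max_eq_right (by positivity), max_eq_right (by rw [sub_nonneg]; exact h12)]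
  field_simp
  ring

lemma tentP_pos (k : ℕ) (hk : 1 ≤ k) {y : ℝ} (h0 : 0 < y) (h1 : y ≤ 1/(k:ℝ)) :
    0 < tentP k y := by
  have hK : (0:ℝ) < k := by exact_mod_cast hk
  rw [tentP_eq k hk y, min_eq_right h1,
    min_eq_right (le_trans h1 (by rw [div_le_div_iff₀ hK hK]; nlinarith)),
    max_eq_right h0.le, max_eq_left (by linarith)]
  simp only [mul_zero, sub_zero]
  positivity

lemma tentM_nonneg (ε : ℝ) (k : ℕ) (hk : 1 ≤ k) (h0 : 0 ≤ ε - 1/(k:ℝ)) (y : ℝ) :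
    0 ≤ tentM ε k y := by
  have hK : (0:ℝ) < k := by exact_mod_cast hk
  rw [tentM_eq ε k h0 (by positivity) y, sub_nonneg]
  apply mul_le_mul_of_nonneg_left _ hK.le
  apply max_le_max le_rfl
  have h1 : min (ε + 1/(k:ℝ)) y ≤ min (ε + 1/(k:ℝ)) (y + 1/(k:ℝ)) := by
    apply min_le_min le_rfl (le_add_of_nonneg_right (by positivity))
  rw [min_add_add_right] at h1
  linarith

lemma tentM_le_one (ε : ℝ) (k : ℕ) (hk : 1 ≤ k) (h0 : 0 ≤ ε - 1/(k:ℝ)) (y : ℝ) :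
    tentM ε k y ≤ 1 := by
  have hK : (0:ℝ) < k := by exact_mod_cast hk
  rw [tentM_eq ε k h0 (by positivity) y]
  have h1 : max 0 (min ε y - (ε - 1/(k:ℝ))) ≤ 1/(k:ℝ) := by
    apply max_le (by positivity)
    have := min_le_left ε y
    linarith
  have h2 : (0:ℝ) ≤ (k:ℝ) * max 0 (min (ε + 1/(k:ℝ)) y - ε) := by positivity
  have h3 : (k:ℝ) * max 0 (min ε y - (ε - 1/(k:ℝ))) ≤ (k:ℝ) * (1/(k:ℝ)) :=
    mul_le_mul_of_nonneg_left h1 hK.le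
  rw [mul_one_div_cancel hK.ne'] at h3
  linarith

lemma tentM_zero_of_le (ε : ℝ) (k : ℕ) (hk : 1 ≤ k) (h0 : 0 ≤ ε - 1/(k:ℝ)) {y : ℝ}
    (hy : y ≤ ε - 1/(k:ℝ)) : tentM ε k y = 0 := by
  have hK : (0:ℝ) < k := by exact_mod_cast hk
  have h1 : (0:ℝ) < 1/(k:ℝ) := by positivity
  rw [tentM_eq ε k h0 (by positivity) y, min_eq_right (by linarith),
    min_eq_right (by linarith), max_eq_left (by linarith), max_eq_left (by linarith)]
  ring

lemma tentM_zero_of_ge (ε : ℝ) (k : ℕ) (hk : 1 ≤ k) (h0 : 0 ≤ ε - 1/(k:ℝ)) {y : ℝ}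
    (hy : ε + 1/(k:ℝ) ≤ y) : tentM ε k y = 0 := by
  have hK : (0:ℝ) < k := by exact_mod_cast hk
  have h1 : (0:ℝ) < 1/(k:ℝ) := by positivity
  rw [tentM_eq ε k h0 (by positivity) y, min_eq_left (by linarith), min_eq_left hy,
    max_eq_right (by linarith), max_eq_right (by linarith)]
  ring

lemma tentM_pos (ε : ℝ) (k : ℕ) (hk : 1 ≤ k) (h0 : 0 ≤ ε - 1/(k:ℝ)) {y : ℝ}
    (hy1 : ε - 1/(k:ℝ) < y) (hy2 : y ≤ ε) : 0 < tentM ε k y := by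
  have hK : (0:ℝ) < k := by exact_mod_cast hk
  have h1 : (0:ℝ) < 1/(k:ℝ) := by positivity
  rw [tentM_eq ε k h0 (by positivity) y, min_eq_right hy2, min_eq_right (by linarith),
    max_eq_right (by linarith), max_eq_left (by linarith)]
  simp only [mul_zero, sub_zero]
  have : 0 < y - (ε - 1/(k:ℝ)) := by linarith
  positivity

lemma tentP_continuous (k : ℕ) : Continuous (tentP k) :=
  intervalIntegral.continuous_primitive (fun _ _ => (gPlus_integrable k).intervalIntegrable) 0

lemma tentM_continuous (ε : ℝ) (k : ℕ) : Continuous (tentM ε k) :=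
  intervalIntegral.continuous_primitive (fun _ _ => (gMinus_integrable ε k).intervalIntegrable) 0

noncomputable def AP (W : StieltjesFunction ℝ) (k : ℕ) (u : ℝ) : ℝ :=
  ∫ y in Ioc (0:ℝ) u, tentP k y ∂W.measure
noncomputable def AM (W : StieltjesFunction ℝ) (ε : ℝ) (k : ℕ) (u : ℝ) : ℝ :=
  ∫ y in Ioc (0:ℝ) u, tentM ε k y ∂W.measure

lemma AP_integrableOn (W : StieltjesFunction ℝ) (k : ℕ) (a b : ℝ) :
    IntegrableOn (tentP k) (Ioc a b) W.measure :=
  (tentP_continuous k).integrableOn_Ioc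

lemma AM_integrableOn (W : StieltjesFunction ℝ) (ε : ℝ) (k : ℕ) (a b : ℝ) :
    IntegrableOn (tentM ε k) (Ioc a b) W.measure :=
  (tentM_continuous ε k).integrableOn_Ioc

lemma AP_mono (W : StieltjesFunction ℝ) (k : ℕ) (hk : 1 ≤ k) : Monotone (AP W k) := by
  intro u v huv
  exact setIntegral_mono_set (AP_integrableOn W k 0 v)
    (Filter.Eventually.of_forall fun y => tentP_nonneg k hk y)
    ((Ioc_subset_Ioc_right huv).eventuallyLE)

lemma AM_mono (W : StieltjesFunction ℝ) (ε : ℝ) (k : ℕ) (hk : 1 ≤ k)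
    (h0 : 0 ≤ ε - 1/(k:ℝ)) : Monotone (AM W ε k) := by
  intro u v huv
  exact setIntegral_mono_set (AM_integrableOn W ε k 0 v)
    (Filter.Eventually.of_forall fun y => tentM_nonneg ε k hk h0 y)
    ((Ioc_subset_Ioc_right huv).eventuallyLE)

lemma AP_nonneg (W : StieltjesFunction ℝ) (k : ℕ) (hk : 1 ≤ k) (u : ℝ) : 0 ≤ AP W k u :=
  setIntegral_nonneg measurableSet_Ioc fun y _ => tentP_nonneg k hk y

lemma AM_nonneg (W : StieltjesFunction ℝ) (ε : ℝ) (k : ℕ) (hk : 1 ≤ k)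
    (h0 : 0 ≤ ε - 1/(k:ℝ)) (u : ℝ) : 0 ≤ AM W ε k u :=
  setIntegral_nonneg measurableSet_Ioc fun y _ => tentM_nonneg ε k hk h0 y

lemma cPlus_eq (W : StieltjesFunction ℝ) (ε : ℝ) (k : ℕ) :
    cPlus W ε k = ε⁻¹ * (AP W k 1)⁻¹ := rfl

lemma cMinus_eq (W : StieltjesFunction ℝ) (ε : ℝ) (k : ℕ) :
    cMinus W ε k = ε⁻¹ * (AM W ε k 1)⁻¹ := rfl

lemma AP_eq_top (W : StieltjesFunction ℝ) (k : ℕ) (hk : 1 ≤ k) {u : ℝ}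
    (h2 : 2/(k:ℝ) ≤ u) (hu : u ≤ 1) : AP W k u = AP W k 1 := by
  have hK : (0:ℝ) < k := by exact_mod_cast hk
  have h0u : (0:ℝ) ≤ u := le_trans (by positivity) h2
  have hsplit : Ioc (0:ℝ) 1 = Ioc 0 u ∪ Ioc u 1 := (Ioc_union_Ioc_eq_Ioc h0u hu).symm
  have hzero : ∫ y in Ioc u 1, tentP k y ∂W.measure = 0 := by
    rw [setIntegral_congr_fun measurableSet_Ioc
      (fun y hy => tentP_zero_of_ge k hk (le_trans h2 hy.1.le))]
    exact integral_zero _ _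
  rw [AP, AP, hsplit, setIntegral_union (Set.Ioc_disjoint_Ioc_of_le le_rfl) measurableSet_Ioc
    (AP_integrableOn W k 0 u) (AP_integrableOn W k u 1), hzero, add_zero]

lemma AM_eq_zero (W : StieltjesFunction ℝ) (ε : ℝ) (k : ℕ) (hk : 1 ≤ k)
    (h0 : 0 ≤ ε - 1/(k:ℝ)) {u : ℝ} (hu : u ≤ ε - 1/(k:ℝ)) : AM W ε k u = 0 := by
  rw [AM, setIntegral_congr_fun measurableSet_Ioc
    (fun y hy => tentM_zero_of_le ε k hk h0 (le_trans hy.2 hu))]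
  exact integral_zero _ _

lemma AM_eq_top (W : StieltjesFunction ℝ) (ε : ℝ) (k : ℕ) (hk : 1 ≤ k)
    (h0 : 0 ≤ ε - 1/(k:ℝ)) {u : ℝ} (h2 : ε + 1/(k:ℝ) ≤ u) (hu : u ≤ 1) :
    AM W ε k u = AM W ε k 1 := by
  have hK : (0:ℝ) < k := by exact_mod_cast hk
  have h0u : (0:ℝ) ≤ u := by
    have : (0:ℝ) < 1/(k:ℝ) := by positivity
    linarith
  have hsplit : Ioc (0:ℝ) 1 = Ioc 0 u ∪ Ioc u 1 := (Ioc_union_Ioc_eq_Ioc h0u hu).symm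
  have hzero : ∫ y in Ioc u 1, tentM ε k y ∂W.measure = 0 := by
    rw [setIntegral_congr_fun measurableSet_Ioc
      (fun y hy => tentM_zero_of_ge ε k hk h0 (le_trans h2 hy.1.le))]
    exact integral_zero _ _
  rw [AM, AM, hsplit, setIntegral_union (Set.Ioc_disjoint_Ioc_of_le le_rfl) measurableSet_Ioc
    (AM_integrableOn W ε k 0 u) (AM_integrableOn W ε k u 1), hzero, add_zero]

lemma AP_pos (W : StieltjesFunction ℝ) (hW : StrictMono W) (k : ℕ) (hk : 1 ≤ k) :
    0 < AP W k 1 := by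
  have hK : (0:ℝ) < k := by exact_mod_cast hk
  have hk1 : 1/(k:ℝ) ≤ 1 := by
    rw [div_le_one hK]; exact_mod_cast hk
  rw [AP, setIntegral_pos_iff_support_of_nonneg_ae
    (Filter.Eventually.of_forall fun y => tentP_nonneg k hk y) (AP_integrableOn W k 0 1)]
  have hsub : Ioc (0:ℝ) (1/(k:ℝ)) ⊆ Function.support (tentP k) ∩ Ioc 0 1 := by
    intro y hy
    exact ⟨(tentP_pos k hk hy.1 hy.2).ne', hy.1, le_trans hy.2 hk1⟩
  calc (0:ENNReal) < W.measure (Ioc 0 (1/(k:ℝ))) := by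
        rw [W.measure_Ioc]
        simp only [ENNReal.ofReal_pos, sub_pos]
        exact hW (by positivity)
    _ ≤ _ := measure_mono hsub

lemma AM_pos (W : StieltjesFunction ℝ) (hW : StrictMono W) (ε : ℝ) (k : ℕ) (hk : 1 ≤ k)
    (h0 : 0 ≤ ε - 1/(k:ℝ)) (hε1 : ε ≤ 1) : 0 < AM W ε k 1 := by
  have hK : (0:ℝ) < k := by exact_mod_cast hk
  have h1k : (0:ℝ) < 1/(k:ℝ) := by positivity
  rw [AM, setIntegral_pos_iff_support_of_nonneg_ae
    (Filter.Eventually.of_forall fun y => tentM_nonneg ε k hk h0 y) (AM_integrableOn W ε k 0 1)]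
  have hsub : Ioc (ε - 1/(k:ℝ)) ε ⊆ Function.support (tentM ε k) ∩ Ioc 0 1 := by
    intro y hy
    refine ⟨(tentM_pos ε k hk h0 hy.1 hy.2).ne', ?_, le_trans hy.2 hε1⟩
    exact lt_of_le_of_lt h0 hy.1
  calc (0:ENNReal) < W.measure (Ioc (ε - 1/(k:ℝ)) ε) := by
        rw [W.measure_Ioc]
        simp only [ENNReal.ofReal_pos, sub_pos]
        exact hW (by linarith)
    _ ≤ _ := measure_mono hsub

lemma iotaK_split (W : StieltjesFunction ℝ) (ε : ℝ) (k : ℕ) (u : ℝ) :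
    iotaK W ε k u = cPlus W ε k * AP W k u - cMinus W ε k * AM W ε k u := by
  have hinner : ∀ y : ℝ, (∫ z in (0:ℝ)..y, gEpsK W ε k z)
      = cPlus W ε k * tentP k y - cMinus W ε k * tentM ε k y := by
    intro y
    have i1 : IntervalIntegrable (fun z => cPlus W ε k * gPlus k z) volume 0 y :=
      ((gPlus_integrable k).const_mul _).intervalIntegrable
    have i2 : IntervalIntegrable (fun z => cMinus W ε k * gMinus ε k z) volume 0 y :=
      ((gMinus_integrable ε k).const_mul _).intervalIntegrable
    rw [show (fun z => gEpsK W ε k z) = fun z =>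
      cPlus W ε k * gPlus k z - cMinus W ε k * gMinus ε k z from rfl]
    rw [intervalIntegral.integral_sub i1 i2, intervalIntegral.integral_const_mul,
      intervalIntegral.integral_const_mul]
    rfl
  rw [iotaK]
  simp_rw [hinner]
  rw [integral_sub ((AP_integrableOn W k 0 u).const_mul _)
    ((AM_integrableOn W ε k 0 u).const_mul _), MeasureTheory.integral_const_mul, MeasureTheory.integral_const_mul]
  rfl

lemma termP_mem (W : StieltjesFunction ℝ) (hW : StrictMono W) (ε : ℝ) (hε0 : 0 < ε)
    (k : ℕ) (hk1 : 1 ≤ k) {u : ℝ} (hu : u ≤ 1) :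
    cPlus W ε k * AP W k u ∈ Icc (0:ℝ) ε⁻¹ := by
  have hpos := AP_pos W hW k hk1
  have hc : 0 ≤ cPlus W ε k := by
    rw [cPlus_eq]
    have := (AP_nonneg W k hk1 1)
    positivity
  constructor
  · exact mul_nonneg hc (AP_nonneg W k hk1 u)
  · calc cPlus W ε k * AP W k u ≤ cPlus W ε k * AP W k 1 :=
        mul_le_mul_of_nonneg_left (AP_mono W k hk1 hu) hc
      _ = ε⁻¹ := by rw [cPlus_eq, mul_assoc, inv_mul_cancel₀ hpos.ne', mul_one]

lemma termP_top (W : StieltjesFunction ℝ) (hW : StrictMono W) (ε : ℝ)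
    (k : ℕ) (hk1 : 1 ≤ k) {u : ℝ} (h2 : 2/(k:ℝ) ≤ u) (hu : u ≤ 1) :
    cPlus W ε k * AP W k u = ε⁻¹ := by
  have hpos := AP_pos W hW k hk1
  rw [AP_eq_top W k hk1 h2 hu, cPlus_eq, mul_assoc, inv_mul_cancel₀ hpos.ne', mul_one]

lemma termM_mem (W : StieltjesFunction ℝ) (hW : StrictMono W) (ε : ℝ) (hε0 : 0 < ε)
    (hε1 : ε ≤ 1) (k : ℕ) (hk1 : 1 ≤ k) (h0 : 0 ≤ ε - 1/(k:ℝ)) {u : ℝ} (hu : u ≤ 1) :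
    cMinus W ε k * AM W ε k u ∈ Icc (0:ℝ) ε⁻¹ := by
  have hpos := AM_pos W hW ε k hk1 h0 hε1
  have hc : 0 ≤ cMinus W ε k := by
    rw [cMinus_eq]
    have := (AM_nonneg W ε k hk1 h0 1)
    positivity
  constructor
  · exact mul_nonneg hc (AM_nonneg W ε k hk1 h0 u)
  · calc cMinus W ε k * AM W ε k u ≤ cMinus W ε k * AM W ε k 1 :=
        mul_le_mul_of_nonneg_left (AM_mono W ε k hk1 h0 hu) hc
      _ = ε⁻¹ := by rw [cMinus_eq, mul_assoc, inv_mul_cancel₀ hpos.ne', mul_one]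

lemma termM_top (W : StieltjesFunction ℝ) (hW : StrictMono W) (ε : ℝ) (hε1 : ε ≤ 1)
    (k : ℕ) (hk1 : 1 ≤ k) (h0 : 0 ≤ ε - 1/(k:ℝ)) {u : ℝ} (h2 : ε + 1/(k:ℝ) ≤ u)
    (hu : u ≤ 1) : cMinus W ε k * AM W ε k u = ε⁻¹ := by
  have hpos := AM_pos W hW ε k hk1 h0 hε1
  rw [AM_eq_top W ε k hk1 h0 h2 hu, cMinus_eq, mul_assoc, inv_mul_cancel₀ hpos.ne', mul_one]

lemma iotaEps_mem (ε : ℝ) (hε0 : 0 < ε) (u : ℝ) : iotaEps ε u ∈ Icc (0:ℝ) ε⁻¹ := by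
  by_cases h : u ∈ Icc (0:ℝ) ε
  · simp only [iotaEps, indicator_of_mem h, mul_one]
    exact ⟨by positivity, le_rfl⟩
  · simp only [iotaEps, indicator_of_notMem h, mul_zero]
    exact ⟨le_rfl, by positivity⟩

open MeasureTheory Set

/-- `ι_ε^k → ι_ε` in `L²([0,1])` as `k → ∞`:
`lim_{k→∞} ∫₀¹ (ι_ε^k(u) − ι_ε(u))² du = 0`. -/
theorem iotaK_tendsto_iotaEps_L2 (W : StieltjesFunction ℝ) (hW : StrictMono W)
    (hWper : ∀ u : ℝ, W (u + 1) - W u = W 1 - W 0)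
    (ε : ℝ) (hε : ε ∈ Set.Ioo (0:ℝ) 1) :
    Filter.Tendsto (fun k : ℕ => ∫ u in Set.Icc (0:ℝ) 1, (iotaK W ε k u - iotaEps ε u) ^ 2)
      Filter.atTop (nhds 0) := by
  obtain ⟨hε0, hε1⟩ := hε
  have htends : Filter.Tendsto (fun k : ℕ => 1/(k:ℝ)) Filter.atTop (nhds 0) :=
    tendsto_one_div_atTop_nhds_zero_nat
  have h2tends : Filter.Tendsto (fun k : ℕ => 2/(k:ℝ)) Filter.atTop (nhds 0) := by
    have := htends.const_mul (2:ℝ)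
    simpa [div_eq_mul_inv] using this
  have hminpos : (0:ℝ) < min ε (1 - ε) := lt_min hε0 (by linarith)
  have hev : ∀ᶠ k : ℕ in Filter.atTop, (1 ≤ k ∧ 1/(k:ℝ) < min ε (1 - ε)) :=
    (Filter.eventually_ge_atTop 1).and (htends.eventually_lt_const hminpos)
  -- basic consequences of being a good k
  have hgood : ∀ k : ℕ, 1 ≤ k → 1/(k:ℝ) < min ε (1 - ε) →
      0 ≤ ε - 1/(k:ℝ) ∧ ε + 1/(k:ℝ) ≤ 1 := by
    intro k hk1 hklt
    have h1 := lt_of_lt_of_le hklt (min_le_left _ _)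
    have h2 := lt_of_lt_of_le hklt (min_le_right _ _)
    constructor <;> linarith
  have key : Filter.Tendsto
      (fun k : ℕ => ∫ u in Set.Icc (0:ℝ) 1, (iotaK W ε k u - iotaEps ε u) ^ 2)
      Filter.atTop (nhds (∫ _ in Set.Icc (0:ℝ) 1, (0:ℝ))) := by
    apply tendsto_integral_filter_of_dominated_convergence (fun _ => (2 * ε⁻¹)^2)
    · -- measurability
      filter_upwards [hev] with k hk
      obtain ⟨hk1, hklt⟩ := hk
      obtain ⟨h0, hεk1⟩ := hgood k hk1 hklt
      have h1 : Measurable (iotaK W ε k) := by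
        have heq : iotaK W ε k = fun u => cPlus W ε k * AP W k u - cMinus W ε k * AM W ε k u :=
          funext (iotaK_split W ε k)
        rw [heq]
        exact (((AP_mono W k hk1).measurable).const_mul _).sub
          (((AM_mono W ε k hk1 h0).measurable).const_mul _)
      have h2 : Measurable (iotaEps ε) :=
        (measurable_const.indicator measurableSet_Icc).const_mul _
      exact (((h1.sub h2).pow_const 2)).aestronglyMeasurable
    · -- bound
      filter_upwards [hev] with k hk
      obtain ⟨hk1, hklt⟩ := hk
      obtain ⟨h0, hεk1⟩ := hgood k hk1 hklt
      filter_upwards [ae_restrict_mem measurableSet_Icc] with u hu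
      have hP := termP_mem W hW ε hε0 k hk1 hu.2
      have hM := termM_mem W hW ε hε0 hε1.le k hk1 h0 hu.2
      have hI := iotaEps_mem ε hε0 u
      rw [iotaK_split W ε k u] at *
      rw [Real.norm_eq_abs, abs_of_nonneg (sq_nonneg _)]
      apply sq_le_sq'
      · obtain ⟨a1, a2⟩ := hP; obtain ⟨b1, b2⟩ := hM; obtain ⟨c1, c2⟩ := hI; linarith
      · obtain ⟨a1, a2⟩ := hP; obtain ⟨b1, b2⟩ := hM; obtain ⟨c1, c2⟩ := hI; linarith
    · exact integrableOn_const measure_Icc_lt_top.ne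
    · -- a.e. pointwise convergence
      have hnull : volume ({0, ε} : Set ℝ) = 0 :=
        (Set.Countable.measure_zero ((Set.countable_singleton ε).insert 0) _)
      have hae : ∀ᵐ u : ℝ ∂volume, u ∉ ({0, ε} : Set ℝ) :=
        measure_eq_zero_iff_ae_notMem.1 hnull
      filter_upwards [ae_restrict_mem measurableSet_Icc, ae_restrict_of_ae hae] with u hu hu2
      simp only [Set.mem_insert_iff, Set.mem_singleton_iff, not_or] at hu2
      obtain ⟨hu0, huε⟩ := hu2
      have h0u : 0 < u := lt_of_le_of_ne hu.1 (Ne.symm hu0)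
      refine Filter.Tendsto.congr' ?_ tendsto_const_nhds
      rcases lt_or_gt_of_ne huε with hcase | hcase
      · -- u < ε
        filter_upwards [hev, h2tends.eventually_lt_const h0u,
          htends.eventually_lt_const (show (0:ℝ) < ε - u by linarith)] with k hk h2u hεu
        obtain ⟨hk1, hklt⟩ := hk
        obtain ⟨h0, hεk1⟩ := hgood k hk1 hklt
        have hAM : AM W ε k u = 0 := AM_eq_zero W ε k hk1 h0 (by linarith)
        have hiota : iotaK W ε k u = ε⁻¹ := by
          rw [iotaK_split W ε k u, hAM, mul_zero, sub_zero,
            termP_top W hW ε k hk1 h2u.le hu.2]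
        have hie : iotaEps ε u = ε⁻¹ := by
          rw [iotaEps, indicator_of_mem (show u ∈ Icc (0:ℝ) ε from ⟨h0u.le, hcase.le⟩), mul_one]
        rw [hiota, hie]
        simp
      · -- ε < u
        filter_upwards [hev, htends.eventually_lt_const (show (0:ℝ) < u - ε by linarith)]
          with k hk hεu
        obtain ⟨hk1, hklt⟩ := hk
        obtain ⟨h0, hεk1⟩ := hgood k hk1 hklt
        have h2u : 2/(k:ℝ) ≤ u := by
          have h1 := lt_of_lt_of_le hklt (min_le_left _ _)
          have : 2/(k:ℝ) = 1/(k:ℝ) + 1/(k:ℝ) := by ring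
          linarith
        have hiota : iotaK W ε k u = 0 := by
          rw [iotaK_split W ε k u, termP_top W hW ε k hk1 h2u hu.2,
            termM_top W hW ε hε1.le k hk1 h0 (by linarith) hu.2]
          ring
        have hie : iotaEps ε u = 0 := by
          rw [iotaEps, indicator_of_notMem (fun h => absurd h.2 (not_le.2 hcase)), mul_zero]
        rw [hiota, hie]
        simp
  simpa using key
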